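/- Fix a factor index k and symmetric matrices D₁,…,D_r at which V := I_n + ∑_{k=1}^r ∑_{j=1}^{l_k} Z_{(k,j)}·D_k·Z_{(k,j)}ᵀ is positive definite and Xᵀ·V⁻¹·X is invertible. Consider the restricted log-likelihood l_R := l − (1/2)·( −p·log σ² + log det(Xᵀ·V⁻¹·X) ) as a function of v ∈ ℝ^{q_k(q_k+1)/2} through D_k equal to the unique symmetric matrix with half-vectorization v, all other quantities held fixed. Then at v = vech(D_k), the gradient of l_R equals the gradient of l plus the correction term (1/2)·𝒟_{q_k}ᵀ·vec( ∑_{j=1}^{l_k} Z_{(k,j)}ᵀ·V⁻¹·X·(Xᵀ·V⁻¹·X)⁻¹·Xᵀ·V⁻¹·Z_{(k,j)} ). -/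

import Mathlib

set_option maxHeartbeats 1000000

open Matrix MeasureTheory ProbabilityTheory

/-- Column-major vectorization of a matrix: the entry of `vec A` at index `(j, i)`
(column `j`, row `i`) is `A i j`. -/
def vec {α β R : Type*} (A : Matrix α β R) : β × α → R := fun p => A p.2 p.1

/-- Index type for the half-vectorization of a `q × q` matrix: pairs `(j, i)`
(column `j`, row `i`) lying on or below the diagonal, i.e. with `j ≤ i`. -/
abbrev VechIdx (q : ℕ) := { p : Fin q × Fin q // p.1 ≤ p.2 }

/-- Half-vectorization: stacks the entries of `A` on and below the diagonal column by column. -/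
def vech {R : Type*} {q : ℕ} (A : Matrix (Fin q) (Fin q) R) : VechIdx q → R :=
  fun p => A p.1.2 p.1.1

/-- The duplication matrix `𝒟_q`: the unique `q² × (q(q+1)/2)` matrix with
`𝒟_q · vech A = vec A` for every symmetric `q × q` matrix `A`. -/
def dup (q : ℕ) : Matrix (Fin q × Fin q) (VechIdx q) ℝ := fun v w =>
  if (v.1 = w.1.1 ∧ v.2 = w.1.2) ∨ (v.1 = w.1.2 ∧ v.2 = w.1.1) then 1 else 0

/-- The commutation matrix `K_{q,q}`: the unique `q² × q²` matrix with
`K_{q,q} · vec A = vec Aᵀ` for every `q × q` matrix `A`. -/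
def commMat (q : ℕ) : Matrix (Fin q × Fin q) (Fin q × Fin q) ℝ := fun a b =>
  if a.1 = b.2 ∧ a.2 = b.1 then 1 else 0

/-- The symmetrization matrix `N_q = (1/2)(I_{q²} + K_{q,q})`. -/
noncomputable def Nmat (q : ℕ) : Matrix (Fin q × Fin q) (Fin q × Fin q) ℝ :=
  (1 / 2 : ℝ) • (1 + commMat q)

/-- The unique symmetric matrix whose half-vectorization is `v`. -/
def unvech {q : ℕ} (v : VechIdx q → ℝ) : Matrix (Fin q) (Fin q) ℝ := fun i j =>
  if h : j ≤ i then v ⟨(j, i), h⟩ else v ⟨(i, j), (not_le.mp h).le⟩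

/-! ### Auxiliary material -/

attribute [local instance] Matrix.linftyOpNormedAddCommGroup Matrix.linftyOpNormedSpace
  Matrix.linftyOpNormedRing Matrix.linftyOpNormedAlgebra

section Aux

lemma my_diff_prod {E ι : Type*} [NormedAddCommGroup E] [NormedSpace ℝ E]
    (s : Finset ι) (f : ι → E → ℝ) (h : ∀ i, Differentiable ℝ (f i)) :
    Differentiable ℝ (fun x => ∏ i ∈ s, f i x) := by
  classical
  induction s using Finset.induction with
  | empty => simpa using differentiable_const (1:ℝ)
  | insert _ _ hi ih => simp only [Finset.prod_insert hi]; exact (h _).mul ih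

/-- Matrix entry evaluation as a linear map. -/
def entryLM (m n : ℕ) (i : Fin m) (j : Fin n) : Matrix (Fin m) (Fin n) ℝ →ₗ[ℝ] ℝ where
  toFun M := M i j
  map_add' _ _ := rfl
  map_smul' _ _ := rfl

lemma differentiable_det (m : ℕ) :
    Differentiable ℝ (fun M : Matrix (Fin m) (Fin m) ℝ => M.det) := by
  have h : (fun M : Matrix (Fin m) (Fin m) ℝ => M.det)
      = fun M => ∑ σ : Equiv.Perm (Fin m), (Equiv.Perm.sign σ : ℝ) * ∏ i, M (σ i) i := by
    funext M; rw [Matrix.det_apply]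
    congr 1; funext σ
    rw [Units.smul_def, zsmul_eq_mul]
  rw [h]
  apply Differentiable.fun_sum
  intro σ _
  exact ((my_diff_prod Finset.univ _ (fun i =>
    (LinearMap.toContinuousLinearMap (entryLM m m (σ i) i)).differentiable))).const_mul _

lemma hasDerivAt_det_one_add_smul {m : ℕ} (C : Matrix (Fin m) (Fin m) ℝ) :
    HasDerivAt (fun t : ℝ => (1 + t • C).det) (Matrix.trace C) 0 := by
  set Q : Polynomial ℝ :=
    (Matrix.det (1 + (Polynomial.X : Polynomial ℝ) • C.map Polynomial.C)).divX.divX with hQ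
  have key : (fun t : ℝ => (1 + t • C).det)
      = fun t => 1 + Matrix.trace C * t + Q.eval t * t ^ 2 := by
    funext t; rw [Matrix.det_one_add_smul t C]
  rw [key]
  have h1 : HasDerivAt (fun t : ℝ => Matrix.trace C * t) (Matrix.trace C) 0 := by
    simpa using (hasDerivAt_id (0:ℝ)).const_mul (Matrix.trace C)
  have h2 : HasDerivAt (fun t : ℝ => Q.eval t * t ^ 2) 0 0 := by
    have := (Q.hasDerivAt 0).fun_mul (hasDerivAt_pow 2 (0:ℝ))
    simpa using this
  have := ((hasDerivAt_const (0:ℝ) (1:ℝ)).fun_add h1).fun_add h2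
  simpa using this

lemma hasDerivAt_det_line {m : ℕ} (A B : Matrix (Fin m) (Fin m) ℝ) (h : IsUnit A.det) :
    HasDerivAt (fun t : ℝ => (A + t • B).det)
      (A.det * Matrix.trace (A⁻¹ * B)) 0 := by
  have key : (fun t : ℝ => (A + t • B).det)
      = fun t => A.det * (1 + t • (A⁻¹ * B)).det := by
    funext t
    rw [← Matrix.det_mul, mul_add, mul_one, Matrix.mul_smul, ← Matrix.mul_assoc,
      Matrix.mul_nonsing_inv A h, Matrix.one_mul]
  rw [key]
  exact (hasDerivAt_det_one_add_smul (A⁻¹ * B)).const_mul A.det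

/-- Jacobi's formula: the Fréchet derivative of `det` at an invertible matrix. -/
noncomputable def jacobiCLM {m : ℕ} (A : Matrix (Fin m) (Fin m) ℝ) :
    Matrix (Fin m) (Fin m) ℝ →L[ℝ] ℝ :=
  LinearMap.toContinuousLinearMap
    (A.det • ((Matrix.traceLinearMap (Fin m) ℝ ℝ).comp (LinearMap.mulLeft ℝ A⁻¹)))

lemma jacobiCLM_apply {m : ℕ} (A H : Matrix (Fin m) (Fin m) ℝ) :
    jacobiCLM A H = A.det * Matrix.trace (A⁻¹ * H) := rfl

lemma hasFDerivAt_det {m : ℕ} (A : Matrix (Fin m) (Fin m) ℝ) (h : IsUnit A.det) :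
    HasFDerivAt (fun M : Matrix (Fin m) (Fin m) ℝ => M.det) (jacobiCLM A) A := by
  have hd := (differentiable_det m) A
  have hf := hd.hasFDerivAt
  have heq : fderiv ℝ (fun M : Matrix (Fin m) (Fin m) ℝ => M.det) A = jacobiCLM A := by
    apply ContinuousLinearMap.ext
    intro H
    have hline : HasDerivAt (fun t : ℝ => A + t • H) H 0 := by
      exact (hasDerivAt_const_add_iff A).mpr (by simpa using (hasDerivAt_id (0:ℝ)).smul_const H)
    have h1 : HasDerivAt (fun t : ℝ => (A + t • H).det)
        (fderiv ℝ (fun M : Matrix (Fin m) (Fin m) ℝ => M.det) A H) 0 := by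
      have hf' : HasFDerivAt (fun M : Matrix (Fin m) (Fin m) ℝ => M.det)
          (fderiv ℝ (fun M : Matrix (Fin m) (Fin m) ℝ => M.det) A) (A + (0:ℝ) • H) := by
        simpa using hf
      have := hf'.comp_hasDerivAt (x := (0:ℝ))
        (f := fun t : ℝ => A + t • H) hline
      exact this
    exact h1.unique (hasDerivAt_det_line A H h)
  rw [← heq]; exact hf

lemma unvech_single {q : ℕ} (w : VechIdx q) (c d : Fin q) :
    unvech (Pi.single w (1:ℝ)) c d = dup q (c, d) w := by
  classical
  obtain ⟨⟨a, b⟩, hab⟩ := w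
  have hab' : (a : ℕ) ≤ b := hab
  simp only [unvech, dup, Pi.single_apply]
  by_cases hdc : d ≤ c
  · rw [dif_pos hdc]
    simp only [Subtype.mk.injEq, Prod.mk.injEq]
    have hdc' : (d : ℕ) ≤ c := hdc
    split_ifs with p1 p2 p2 <;> try rfl
    · exfalso; apply p2
      simp only [Fin.ext_iff] at p1 ⊢; omega
    · exfalso; apply p1
      simp only [Fin.ext_iff] at p2 ⊢; omega
  · rw [dif_neg hdc]
    simp only [Subtype.mk.injEq, Prod.mk.injEq]
    have hdc' : (c : ℕ) < d := by
      simp only [Fin.le_def, not_le] at hdc; exact hdc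
    split_ifs with p1 p2 p2 <;> try rfl
    · exfalso; apply p2
      simp only [Fin.ext_iff] at p1 ⊢; omega
    · exfalso; apply p1
      simp only [Fin.ext_iff] at p2 ⊢; omega

lemma trace_mul_unvech_single {q : ℕ} (N : Matrix (Fin q) (Fin q) ℝ) (w : VechIdx q) :
    Matrix.trace (N * unvech (Pi.single w (1:ℝ))) = ((dup q)ᵀ.mulVec (_root_.vec N)) w := by
  simp only [Matrix.trace, Matrix.diag, Matrix.mul_apply, Matrix.mulVec, dotProduct,
    Matrix.transpose_apply, _root_.vec, unvech_single, Fintype.sum_prod_type]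
  rw [Finset.sum_comm]
  congr 1; funext m
  congr 1; funext i
  ring

lemma unvech_vech {q : ℕ} (A : Matrix (Fin q) (Fin q) ℝ) (h : A.IsSymm) :
    unvech (vech A) = A := by
  funext i j
  simp only [unvech, vech]
  split_ifs with hle
  · rfl
  · exact (h.apply j i).symm

/-- `M ↦ A * M * B` as a linear map. -/
def mulLM {n p m : ℕ} (A : Matrix (Fin p) (Fin n) ℝ) (B : Matrix (Fin n) (Fin m) ℝ) :
    Matrix (Fin n) (Fin n) ℝ →ₗ[ℝ] Matrix (Fin p) (Fin m) ℝ where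
  toFun M := A * M * B
  map_add' M N := by simp [Matrix.mul_add, Matrix.add_mul]
  map_smul' c M := by simp [Matrix.mul_smul, Matrix.smul_mul]

/-- `M ↦ e ⬝ᵥ M *ᵥ e` as a linear map. -/
def quadLM {n : ℕ} (e : Fin n → ℝ) : Matrix (Fin n) (Fin n) ℝ →ₗ[ℝ] ℝ where
  toFun M := e ⬝ᵥ (M *ᵥ e)
  map_add' M N := by simp [Matrix.add_mulVec, dotProduct_add]
  map_smul' c M := by simp [Matrix.smul_mulVec, dotProduct_smul]

/-- `unvech` as a linear map. -/
def unvechLM {q : ℕ} : (VechIdx q → ℝ) →ₗ[ℝ] Matrix (Fin q) (Fin q) ℝ where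
  toFun := unvech
  map_add' u v := by
    funext i j
    by_cases h : j ≤ i <;> simp [unvech, h, Matrix.add_apply]
  map_smul' c u := by
    funext i j
    by_cases h : j ≤ i <;> simp [unvech, h]

/-- `M ↦ ∑ j, Z j * M * (Z j)ᵀ` as a linear map. -/
def sandwichLM {n q : ℕ} {ι : Type*} [Fintype ι] (Z : ι → Matrix (Fin n) (Fin q) ℝ) :
    Matrix (Fin q) (Fin q) ℝ →ₗ[ℝ] Matrix (Fin n) (Fin n) ℝ where
  toFun M := ∑ j, Z j * M * (Z j)ᵀ
  map_add' M N := by simp [Matrix.mul_add, Matrix.add_mul, Finset.sum_add_distrib]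
  map_smul' c M := by simp [Matrix.mul_smul, Matrix.smul_mul, Finset.smul_sum]

end Aux

theorem stmt14 (n p r : ℕ) (hn : 0 < n) (hp : 0 < p) (σ : ℝ) (hσ : 0 < σ)
    (e : Fin n → ℝ) (X : Matrix (Fin n) (Fin p) ℝ)
    (l q : Fin r → ℕ)
    (Z : (k : Fin r) → Fin (l k) → Matrix (Fin n) (Fin (q k)) ℝ)
    (D : (k : Fin r) → Matrix (Fin (q k)) (Fin (q k)) ℝ)
    (hDsymm : ∀ k', (D k').IsSymm)
    (k : Fin r)
    (V : Matrix (Fin n) (Fin n) ℝ)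
    (hV : V = 1 + ∑ k', ∑ j, Z k' j * D k' * (Z k' j)ᵀ)
    (hVpd : V.PosDef)
    (hXVX : IsUnit (Xᵀ * V⁻¹ * X).det)
    -- the map sending `v` to the matrix `V` computed with `D_k` replaced by the unique
    -- symmetric matrix whose half-vectorization is `v`
    (Vf : (VechIdx (q k) → ℝ) → Matrix (Fin n) (Fin n) ℝ)
    (hVf : Vf = fun v =>
      1 + ∑ k', ∑ j, Z k' j * Function.update D k (unvech v) k' * (Z k' j)ᵀ)
    -- the log-likelihood as a function of `vech(D_k)`
    (g : (VechIdx (q k) → ℝ) → ℝ)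
    (hg : g = fun v =>
      -(1 / 2 : ℝ) * ((n : ℝ) * Real.log (σ ^ 2)
        + (σ ^ 2)⁻¹ * (e ⬝ᵥ ((Vf v)⁻¹ *ᵥ e))
        + Real.log (Vf v).det))
    -- the restricted log-likelihood as a function of `vech(D_k)`
    (gR : (VechIdx (q k) → ℝ) → ℝ)
    (hgR : gR = fun v =>
      g v - (1 / 2 : ℝ) * (-(p : ℝ) * Real.log (σ ^ 2)
        + Real.log (Xᵀ * (Vf v)⁻¹ * X).det)) :
    DifferentiableAt ℝ gR (vech (D k)) ∧
    DifferentiableAt ℝ g (vech (D k)) ∧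
    ∀ w : VechIdx (q k),
      fderiv ℝ gR (vech (D k)) (Pi.single w 1) =
        fderiv ℝ g (vech (D k)) (Pi.single w 1) +
          ((1 / 2 : ℝ) • (dup (q k))ᵀ.mulVec
            (_root_.vec (∑ j, (Z k j)ᵀ * V⁻¹ * X * (Xᵀ * V⁻¹ * X)⁻¹ * Xᵀ * V⁻¹ * Z k j))) w := by
  classical
  set x₀ : VechIdx (q k) → ℝ := vech (D k) with hx₀def
  have hunvech_x₀ : unvech x₀ = D k := unvech_vech _ (hDsymm k)
  set ΦC : ((VechIdx (q k) → ℝ)) →L[ℝ] Matrix (Fin n) (Fin n) ℝ :=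
    LinearMap.toContinuousLinearMap ((sandwichLM (Z k)).comp unvechLM) with hΦC
  have hΦapp : ∀ u, ΦC u = ∑ j, Z k j * unvech u * (Z k j)ᵀ := by
    intro u
    rw [hΦC, LinearMap.coe_toContinuousLinearMap']
    rfl
  -- affine description of Vf
  have hsplit : ∀ (M : Matrix (Fin (q k)) (Fin (q k)) ℝ),
      (∑ k', ∑ j, Z k' j * Function.update D k M k' * (Z k' j)ᵀ)
      = (∑ j, Z k j * M * (Z k j)ᵀ)
        + ∑ k' ∈ Finset.univ.erase k, ∑ j, Z k' j * D k' * (Z k' j)ᵀ := by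
    intro M
    rw [← Finset.add_sum_erase _ _ (Finset.mem_univ k)]
    congr 1
    · simp only [Function.update_self]
    · refine Finset.sum_congr rfl fun k' hk' => ?_
      rw [Function.update_of_ne (Finset.ne_of_mem_erase hk')]
  have haff : ∀ v, Vf v = V + ΦC (v - x₀) := by
    intro v
    have huv : unvech v = D k + unvech (v - x₀) := by
      have h' : unvech (x₀ + (v - x₀)) = unvech x₀ + unvech (v - x₀) :=
        unvechLM.map_add x₀ (v - x₀)
      rw [hunvech_x₀] at h'
      simpa using h'
    rw [hVf, hV]
    simp only
    rw [hsplit (unvech v), huv, hΦapp]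
    have hDk : (∑ k', ∑ j, Z k' j * D k' * (Z k' j)ᵀ)
        = (∑ j, Z k j * D k * (Z k j)ᵀ)
          + ∑ k' ∈ Finset.univ.erase k, ∑ j, Z k' j * D k' * (Z k' j)ᵀ := by
      rw [← Finset.add_sum_erase _ _ (Finset.mem_univ k)]
    rw [hDk]
    have hexp : (∑ j, Z k j * (D k + unvech (v - x₀)) * (Z k j)ᵀ)
        = (∑ j, Z k j * D k * (Z k j)ᵀ) + ∑ j, Z k j * unvech (v - x₀) * (Z k j)ᵀ := by
      simp [Matrix.mul_add, Matrix.add_mul, Finset.sum_add_distrib]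
    rw [hexp]
    abel
  have hVfx₀ : Vf x₀ = V := by rw [haff]; simp
  have hVfd : Differentiable ℝ Vf := by
    have hfun : Vf = fun v => V + ΦC (v - x₀) := funext haff
    rw [hfun]
    exact (ΦC.differentiable.comp (differentiable_id.sub_const x₀)).const_add V
  -- invertibility facts
  have hVdet_pos : 0 < V.det := hVpd.det_pos
  have hVdetU : IsUnit V.det := isUnit_iff_ne_zero.mpr hVdet_pos.ne'
  have hVunit : IsUnit V := (Matrix.isUnit_iff_isUnit_det V).mpr hVdetU
  have hM₀ne : (Xᵀ * V⁻¹ * X).det ≠ 0 := hXVX.ne_zero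
  -- differentiability of the inverse
  have hinvd : DifferentiableAt ℝ (fun v => (Vf v)⁻¹) x₀ := by
    have hfun : (fun v => (Vf v)⁻¹) = fun v => Ring.inverse (Vf v) :=
      funext fun v => Matrix.nonsing_inv_eq_ringInverse (Vf v)
    rw [hfun]
    exact (hVfd x₀).inverse (by rw [hVfx₀]; exact hVunit)
  have hXVXmd : DifferentiableAt ℝ (fun v => Xᵀ * (Vf v)⁻¹ * X) x₀ :=
    ((LinearMap.toContinuousLinearMap (mulLM Xᵀ X)).differentiable.differentiableAt).comp x₀ hinvd
  have hdetXVXd : DifferentiableAt ℝ (fun v => (Xᵀ * (Vf v)⁻¹ * X).det) x₀ :=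
    ((differentiable_det p).differentiableAt).comp x₀ hXVXmd
  have hlogXVX : DifferentiableAt ℝ (fun v => Real.log ((Xᵀ * (Vf v)⁻¹ * X).det)) x₀ := by
    refine hdetXVXd.log ?_
    show (Xᵀ * (Vf x₀)⁻¹ * X).det ≠ 0
    rw [hVfx₀]; exact hM₀ne
  have hdetVfd : DifferentiableAt ℝ (fun v => (Vf v).det) x₀ :=
    ((differentiable_det n).differentiableAt).comp x₀ (hVfd x₀)
  have hlogdetVf : DifferentiableAt ℝ (fun v => Real.log ((Vf v).det)) x₀ := by
    refine hdetVfd.log ?_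
    show (Vf x₀).det ≠ 0
    rw [hVfx₀]; exact hVdet_pos.ne'
  have hquadd : DifferentiableAt ℝ (fun v => e ⬝ᵥ ((Vf v)⁻¹ *ᵥ e)) x₀ :=
    ((LinearMap.toContinuousLinearMap (quadLM e)).differentiable.differentiableAt).comp x₀ hinvd
  have hgd : DifferentiableAt ℝ g x₀ := by
    rw [hg]
    exact (((differentiableAt_const _).add (hquadd.const_mul _)).add hlogdetVf).const_mul _
  have hcd : DifferentiableAt ℝ (fun v => (1 / 2 : ℝ) * (-(p : ℝ) * Real.log (σ ^ 2)
      + Real.log ((Xᵀ * (Vf v)⁻¹ * X).det))) x₀ :=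
    ((differentiableAt_const _).add hlogXVX).const_mul _
  have hgRd : DifferentiableAt ℝ gR x₀ := by
    rw [hgR]
    exact hgd.sub hcd
  refine ⟨hgRd, hgd, ?_⟩
  intro w
  set dir : VechIdx (q k) → ℝ := Pi.single w 1 with hdir
  set W : Matrix (Fin n) (Fin n) ℝ := ∑ j, Z k j * unvech dir * (Z k j)ᵀ with hWdef
  have hΦdir : ΦC dir = W := hΦapp dir
  have hline : ∀ t : ℝ, Vf (x₀ + t • dir) = V + t • W := by
    intro t
    rw [haff]
    congr 1
    rw [show x₀ + t • dir - x₀ = t • dir by abel, ΦC.map_smul, hΦdir]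
  -- path derivatives
  have hlin : HasDerivAt (fun t : ℝ => V + t • W) W 0 := by
    exact (hasDerivAt_const_add_iff V).mpr (by simpa using (hasDerivAt_id (0:ℝ)).smul_const W)
  have hinvpath : HasDerivAt (fun t : ℝ => (V + t • W)⁻¹) (-(V⁻¹ * W * V⁻¹)) 0 := by
    have hfd := hasFDerivAt_ringInverse (𝕜 := ℝ) hVunit.unit
    rw [IsUnit.unit_spec] at hfd
    have hfd' : HasFDerivAt Ring.inverse
        (-(ContinuousLinearMap.mulLeftRight ℝ _ ↑hVunit.unit⁻¹ ↑hVunit.unit⁻¹))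
        ((fun t : ℝ => V + t • W) 0) := by simpa using hfd
    have hcomp := hfd'.comp_hasDerivAt 0 hlin
    have hval : (-(ContinuousLinearMap.mulLeftRight ℝ _ ↑hVunit.unit⁻¹ ↑hVunit.unit⁻¹)) W
        = -(V⁻¹ * W * V⁻¹) := by
      simp [ContinuousLinearMap.mulLeftRight_apply, Matrix.coe_units_inv, IsUnit.unit_spec]
    rw [hval] at hcomp
    have hfun : (fun t : ℝ => (V + t • W)⁻¹) = fun t => Ring.inverse (V + t • W) :=
      funext fun t => Matrix.nonsing_inv_eq_ringInverse _
    rw [hfun]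
    exact hcomp
  have hXinvpath : HasDerivAt (fun t : ℝ => Xᵀ * (V + t • W)⁻¹ * X)
      (Xᵀ * (-(V⁻¹ * W * V⁻¹)) * X) 0 := by
    have hL := ((LinearMap.toContinuousLinearMap (mulLM Xᵀ X)).hasFDerivAt
      (x := (fun t : ℝ => (V + t • W)⁻¹) 0)).comp_hasDerivAt 0 hinvpath
    exact hL
  have hdetpath : HasDerivAt (fun t : ℝ => (Xᵀ * (V + t • W)⁻¹ * X).det)
      (jacobiCLM (Xᵀ * V⁻¹ * X) (Xᵀ * (-(V⁻¹ * W * V⁻¹)) * X)) 0 := by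
    have hfd : HasFDerivAt (fun M : Matrix (Fin p) (Fin p) ℝ => M.det)
        (jacobiCLM (Xᵀ * V⁻¹ * X)) ((fun t : ℝ => Xᵀ * (V + t • W)⁻¹ * X) 0) := by
      simpa using hasFDerivAt_det (Xᵀ * V⁻¹ * X) hXVX
    exact hfd.comp_hasDerivAt 0 hXinvpath
  have hlogpath : HasDerivAt (fun t : ℝ => Real.log ((Xᵀ * (V + t • W)⁻¹ * X).det))
      (-Matrix.trace ((Xᵀ * V⁻¹ * X)⁻¹ * (Xᵀ * (V⁻¹ * W * V⁻¹) * X))) 0 := by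
    have hne : ((fun t : ℝ => (Xᵀ * (V + t • W)⁻¹ * X).det) 0) ≠ 0 := by
      simpa using hM₀ne
    have hl := hdetpath.log hne
    have hval : jacobiCLM (Xᵀ * V⁻¹ * X) (Xᵀ * (-(V⁻¹ * W * V⁻¹)) * X)
        / ((fun t : ℝ => (Xᵀ * (V + t • W)⁻¹ * X).det) 0)
        = -Matrix.trace ((Xᵀ * V⁻¹ * X)⁻¹ * (Xᵀ * (V⁻¹ * W * V⁻¹) * X)) := by
      have h00 : ((fun t : ℝ => (Xᵀ * (V + t • W)⁻¹ * X).det) 0) = (Xᵀ * V⁻¹ * X).det := by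
        simp
      rw [h00, jacobiCLM_apply, mul_div_cancel_left₀ _ hM₀ne]
      simp [Matrix.mul_neg, Matrix.neg_mul, Matrix.trace_neg]
    rw [hval] at hl
    exact hl
  -- fderiv of log det term via path uniqueness
  have hlinx : HasDerivAt (fun t : ℝ => x₀ + t • dir) dir 0 := by
    simpa using ((hasDerivAt_id (0:ℝ)).smul_const dir).const_add x₀
  have hpath1 : HasDerivAt
      (fun t : ℝ => Real.log ((Xᵀ * (Vf (x₀ + t • dir))⁻¹ * X).det))
      (fderiv ℝ (fun v => Real.log ((Xᵀ * (Vf v)⁻¹ * X).det)) x₀ dir) 0 := by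
    have hf := hlogXVX.hasFDerivAt
    have hf' : HasFDerivAt (fun v => Real.log ((Xᵀ * (Vf v)⁻¹ * X).det))
        (fderiv ℝ (fun v => Real.log ((Xᵀ * (Vf v)⁻¹ * X).det)) x₀)
        ((fun t : ℝ => x₀ + t • dir) 0) := by simpa using hf
    exact hf'.comp_hasDerivAt 0 hlinx
  have hpath2 : HasDerivAt
      (fun t : ℝ => Real.log ((Xᵀ * (Vf (x₀ + t • dir))⁻¹ * X).det))
      (-Matrix.trace ((Xᵀ * V⁻¹ * X)⁻¹ * (Xᵀ * (V⁻¹ * W * V⁻¹) * X))) 0 := by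
    have heq : (fun t : ℝ => Real.log ((Xᵀ * (Vf (x₀ + t • dir))⁻¹ * X).det))
        = fun t : ℝ => Real.log ((Xᵀ * (V + t • W)⁻¹ * X).det) := by
      funext t; rw [hline t]
    rw [heq]
    exact hlogpath
  have hfdℓ : fderiv ℝ (fun v => Real.log ((Xᵀ * (Vf v)⁻¹ * X).det)) x₀ dir
      = -Matrix.trace ((Xᵀ * V⁻¹ * X)⁻¹ * (Xᵀ * (V⁻¹ * W * V⁻¹) * X)) :=
    hpath1.unique hpath2
  -- fderiv of gR minus fderiv of g
  have hsub : fderiv ℝ gR x₀ = fderiv ℝ g x₀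
      - fderiv ℝ (fun v => (1 / 2 : ℝ) * (-(p : ℝ) * Real.log (σ ^ 2)
          + Real.log ((Xᵀ * (Vf v)⁻¹ * X).det))) x₀ := by
    rw [hgR]
    exact fderiv_sub hgd hcd
  have hcval : fderiv ℝ (fun v => (1 / 2 : ℝ) * (-(p : ℝ) * Real.log (σ ^ 2)
      + Real.log ((Xᵀ * (Vf v)⁻¹ * X).det))) x₀ dir
      = (1 / 2 : ℝ) * (fderiv ℝ (fun v => Real.log ((Xᵀ * (Vf v)⁻¹ * X).det)) x₀ dir) := by
    rw [fderiv_const_mul ((differentiableAt_const _).fun_add hlogXVX) ((1:ℝ)/2)]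
    rw [fderiv_const_add]
    rfl
  -- the trace identity
  have htr : Matrix.trace ((Xᵀ * V⁻¹ * X)⁻¹ * (Xᵀ * (V⁻¹ * W * V⁻¹) * X))
      = Matrix.trace
          ((∑ j, (Z k j)ᵀ * V⁻¹ * X * (Xᵀ * V⁻¹ * X)⁻¹ * Xᵀ * V⁻¹ * Z k j) * unvech dir) := by
    have hmat : (Xᵀ * V⁻¹ * X)⁻¹ * (Xᵀ * (V⁻¹ * W * V⁻¹) * X)
        = ∑ j, ((Xᵀ * V⁻¹ * X)⁻¹ * (Xᵀ * (V⁻¹ * ((Z k j * unvech dir) * (Z k j)ᵀ) * V⁻¹) * X)) := by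
      rw [hWdef]
      simp only [Matrix.mul_sum, Matrix.sum_mul]
    rw [hmat, Matrix.trace_sum, Matrix.sum_mul, Matrix.trace_sum]
    refine Finset.sum_congr rfl fun j _ => ?_
    have e1 : (Xᵀ * V⁻¹ * X)⁻¹ * (Xᵀ * (V⁻¹ * ((Z k j * unvech dir) * (Z k j)ᵀ) * V⁻¹) * X)
        = ((Xᵀ * V⁻¹ * X)⁻¹ * (Xᵀ * (V⁻¹ * (Z k j * unvech dir)))) * ((Z k j)ᵀ * (V⁻¹ * X)) := by
      simp only [Matrix.mul_assoc]
    rw [e1, Matrix.trace_mul_comm]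
    have e2 : ((Z k j)ᵀ * (V⁻¹ * X)) * ((Xᵀ * V⁻¹ * X)⁻¹ * (Xᵀ * (V⁻¹ * (Z k j * unvech dir))))
        = ((Z k j)ᵀ * V⁻¹ * X * (Xᵀ * V⁻¹ * X)⁻¹ * Xᵀ * V⁻¹ * Z k j) * unvech dir := by
      simp only [Matrix.mul_assoc]
    rw [e2]
  -- final assembly
  rw [hsub]
  rw [ContinuousLinearMap.sub_apply]
  show fderiv ℝ g x₀ dir - _ = fderiv ℝ g x₀ dir + _
  rw [hcval, hfdℓ, htr]
  rw [trace_mul_unvech_single]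
  rw [Pi.smul_apply, smul_eq_mul]
  ring
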